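/- Let a : (0,1) → ℝ satisfy a(x+y) = a(x) + a(y) for all x, y with x, y, x+y ∈ (0,1). If a is Lebesgue measurable, then there exists c ∈ ℝ such that a(x) = c·x for all x ∈ (0,1). -/

import Mathlib

open MeasureTheory Set Pointwise

/-- Scaling lemma: `a ((n+1) * t) = (n+1) * a t` when everything stays in `(0,1)`. -/
private lemma aux_scale (a : ℝ → ℝ)
    (hadd : ∀ x y : ℝ, x ∈ Set.Ioo (0:ℝ) 1 → y ∈ Set.Ioo (0:ℝ) 1 →
      x + y ∈ Set.Ioo (0:ℝ) 1 → a (x + y) = a x + a y) :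
    ∀ (n : ℕ) (t : ℝ), 0 < t → ((n:ℝ)+1) * t < 1 → a (((n:ℝ)+1) * t) = ((n:ℝ)+1) * a t := by
  intro n
  induction n with
  | zero => intro t ht h1; norm_num
  | succ n ih =>
    intro t ht h1
    push_cast at h1 ⊢
    have hnt : ((n:ℝ)+1) * t < ((n:ℝ)+1+1) * t := by nlinarith [(Nat.cast_nonneg n : (0:ℝ) ≤ (n:ℝ))]
    have htlt : t < 1 := by nlinarith [(Nat.cast_nonneg n : (0:ℝ) ≤ (n:ℝ))]
    have h2 : a (((n:ℝ)+1) * t + t) = a (((n:ℝ)+1) * t) + a t := by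
      apply hadd
      · constructor
        · positivity
        · nlinarith
      · exact ⟨ht, htlt⟩
      · constructor
        · positivity
        · nlinarith
    have h3 := ih t ht (by nlinarith)
    have : ((n:ℝ)+1+1) * t = ((n:ℝ)+1) * t + t := by ring
    rw [this, h2, h3]
    ring

private noncomputable def Afun (a : ℝ → ℝ) : ℝ → ℝ := fun s => a (s + 1/2) - a (1/2)

/-- Translation invariance: for small `s` and `u` in the middle region. -/
private lemma aux_trans (a : ℝ → ℝ)
    (hadd : ∀ x y : ℝ, x ∈ Set.Ioo (0:ℝ) 1 → y ∈ Set.Ioo (0:ℝ) 1 →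
      x + y ∈ Set.Ioo (0:ℝ) 1 → a (x + y) = a x + a y) :
    ∀ s u : ℝ, |s| < 1/8 → 3/8 ≤ u → u ≤ 5/8 → a (s + u) = Afun a s + a u := by
  intro s u hs hu1 hu2
  rw [abs_lt] at hs
  unfold Afun
  rcases lt_trichotomy s 0 with h | h | h
  · have h1 := hadd (s + u) (-s) ⟨by linarith, by linarith⟩ ⟨by linarith, by linarith⟩
      (by constructor <;> [linarith; linarith])
    rw [show s + u + -s = u by ring] at h1
    have h2 := hadd (s + 1/2) (-s) ⟨by linarith, by linarith⟩ ⟨by linarith, by linarith⟩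
      (by constructor <;> [linarith; linarith])
    rw [show s + 1/2 + -s = (1:ℝ)/2 by ring] at h2
    linarith
  · subst h; simp
  · have h1 := hadd s u ⟨h, by linarith⟩ ⟨by linarith, by linarith⟩
      ⟨by linarith, by linarith⟩
    have h2 := hadd s (1/2) ⟨h, by linarith⟩ ⟨by norm_num, by norm_num⟩
      ⟨by linarith, by linarith⟩
    linarith

/-- Local additivity of `Afun`. -/
private lemma aux_Aadd (a : ℝ → ℝ)
    (hadd : ∀ x y : ℝ, x ∈ Set.Ioo (0:ℝ) 1 → y ∈ Set.Ioo (0:ℝ) 1 →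
      x + y ∈ Set.Ioo (0:ℝ) 1 → a (x + y) = a x + a y) :
    ∀ s t : ℝ, |s| < 1/8 → |t| < 1/8 → Afun a (s + t) = Afun a s + Afun a t := by
  intro s t hs ht
  have ht' := abs_lt.1 ht
  have h1 : a (s + (t + 1/2)) = Afun a s + a (t + 1/2) :=
    aux_trans a hadd s (t + 1/2) hs (by linarith) (by linarith)
  have : s + t + 1/2 = s + (t + 1/2) := by ring
  unfold Afun at *
  rw [this, h1]
  ring

/-- `Afun` of a natural multiple. -/
private lemma aux_Anat (a : ℝ → ℝ)
    (hadd : ∀ x y : ℝ, x ∈ Set.Ioo (0:ℝ) 1 → y ∈ Set.Ioo (0:ℝ) 1 →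
      x + y ∈ Set.Ioo (0:ℝ) 1 → a (x + y) = a x + a y) :
    ∀ (m : ℕ) (s : ℝ), |s| < 1/8 → |(m:ℝ) * s| < 1/8 → Afun a ((m:ℝ) * s) = m * Afun a s := by
  intro m
  induction m with
  | zero => intro s _ _; simp [Afun]
  | succ m ih =>
    intro s hs hms
    have hle : |(m:ℝ) * s| ≤ |((m:ℝ)+1) * s| := by
      rw [abs_mul, abs_mul]
      have : |(m:ℝ)| ≤ |((m:ℝ)+1)| := by
        rw [abs_of_nonneg (by positivity), abs_of_nonneg (by positivity)]
        linarith
      exact mul_le_mul_of_nonneg_right this (abs_nonneg s)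
    push_cast at hms ⊢
    have hms' : |(m:ℝ) * s| < 1/8 := lt_of_le_of_lt hle hms
    have : ((m:ℝ)+1) * s = (m:ℝ) * s + s := by ring
    rw [this, aux_Aadd a hadd _ _ hms' hs, ih s hs hms']
    ring

private noncomputable def gfun (a : ℝ → ℝ) : ℝ → ℝ :=
  fun x => (16 * ((⌈|x|⌉₊ : ℝ) + 1)) * Afun a (x / (16 * ((⌈|x|⌉₊ : ℝ) + 1)))

private lemma aux_gval (a : ℝ → ℝ)
    (hadd : ∀ x y : ℝ, x ∈ Set.Ioo (0:ℝ) 1 → y ∈ Set.Ioo (0:ℝ) 1 →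
      x + y ∈ Set.Ioo (0:ℝ) 1 → a (x + y) = a x + a y) :
    ∀ (x : ℝ) (n : ℕ), 0 < n → |x / n| < 1/8 → gfun a x = n * Afun a (x / n) := by
  intro x n hn hxn
  set m : ℕ := 16 * (⌈|x|⌉₊ + 1) with hm
  have hmcast : (16 * ((⌈|x|⌉₊ : ℝ) + 1)) = (m : ℝ) := by push_cast [hm]; ring
  have hm0 : 0 < m := by positivity
  have hk0 : (0:ℝ) < m := by exact_mod_cast hm0
  have hn0 : (0:ℝ) < n := by exact_mod_cast hn
  have hn1 : (1:ℝ) ≤ n := by exact_mod_cast hn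
  have hm1 : (1:ℝ) ≤ m := by exact_mod_cast hm0
  have hxk : |x / m| < 1/8 := by
    rw [abs_div, abs_of_pos hk0, div_lt_iff₀ hk0]
    have h1 : |x| ≤ (⌈|x|⌉₊ : ℝ) := Nat.le_ceil _
    have h2 : ((⌈|x|⌉₊:ℝ)) + 1 ≤ (m:ℝ) / 16 := by rw [← hmcast]; ring_nf; linarith
    nlinarith
  have hkn0 : (0:ℝ) < (m:ℝ) * n := by positivity
  have hsmall : |x / ((m:ℝ) * n)| < 1/8 := by
    have h : |x / ((m:ℝ) * n)| ≤ |x / m| := by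
      rw [abs_div, abs_div, abs_of_pos hk0, abs_of_pos hkn0]
      apply div_le_div_of_nonneg_left (abs_nonneg x) hk0
      nlinarith
    linarith
  have e1 : Afun a (x / m) = n * Afun a (x / ((m:ℝ) * n)) := by
    have heq : (n:ℝ) * (x / ((m:ℝ) * n)) = x / m := by field_simp
    have := aux_Anat a hadd n (x / ((m:ℝ) * n)) hsmall (by rw [heq]; exact hxk)
    rw [heq] at this; exact this
  have e2 : Afun a (x / n) = m * Afun a (x / ((m:ℝ) * n)) := by
    have heq : (m:ℝ) * (x / ((m:ℝ) * n)) = x / n := by field_simp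
    have := aux_Anat a hadd m (x / ((m:ℝ) * n)) hsmall (by rw [heq]; exact hxn)
    rw [heq] at this; exact this
  unfold gfun
  rw [hmcast, e1, e2]
  ring

private lemma aux_gadd (a : ℝ → ℝ)
    (hadd : ∀ x y : ℝ, x ∈ Set.Ioo (0:ℝ) 1 → y ∈ Set.Ioo (0:ℝ) 1 →
      x + y ∈ Set.Ioo (0:ℝ) 1 → a (x + y) = a x + a y) :
    ∀ x y : ℝ, gfun a (x + y) = gfun a x + gfun a y := by
  intro x y
  set M : ℕ := 32 * (⌈|x|⌉₊ + ⌈|y|⌉₊ + 1) with hM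
  have hM0 : 0 < M := by positivity
  have hMr : (0:ℝ) < M := by exact_mod_cast hM0
  have hS : (32:ℝ) * ((⌈|x|⌉₊ : ℝ) + (⌈|y|⌉₊ : ℝ) + 1) = (M:ℝ) := by push_cast [hM]; ring
  have hxb : |x| ≤ (M:ℝ) / 32 := by
    have h1 := Nat.le_ceil |x|
    have h2 : (0:ℝ) ≤ (⌈|y|⌉₊ : ℝ) := by positivity
    rw [← hS]; linarith
  have hyb : |y| ≤ (M:ℝ) / 32 := by
    have h1 := Nat.le_ceil |y|
    have h2 : (0:ℝ) ≤ (⌈|x|⌉₊ : ℝ) := by positivity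
    rw [← hS]; linarith
  have hxM : |x / M| < 1/8 := by
    rw [abs_div, abs_of_pos hMr, div_lt_iff₀ hMr]; nlinarith
  have hyM : |y / M| < 1/8 := by
    rw [abs_div, abs_of_pos hMr, div_lt_iff₀ hMr]; nlinarith
  have hxyM : |(x + y) / M| < 1/8 := by
    rw [abs_div, abs_of_pos hMr, div_lt_iff₀ hMr]
    have := abs_add_le x y
    nlinarith
  rw [aux_gval a hadd (x + y) M hM0 hxyM, aux_gval a hadd x M hM0 hxM,
    aux_gval a hadd y M hM0 hyM]
  have hsplit : (x + y) / M = x / M + y / M := by ring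
  rw [hsplit, aux_Aadd a hadd _ _ hxM hyM]
  ring

private lemma aux_gagree (a : ℝ → ℝ)
    (hadd : ∀ x y : ℝ, x ∈ Set.Ioo (0:ℝ) 1 → y ∈ Set.Ioo (0:ℝ) 1 →
      x + y ∈ Set.Ioo (0:ℝ) 1 → a (x + y) = a x + a y) :
    ∀ x ∈ Set.Ioo (0:ℝ) 1, gfun a x = a x := by
  rintro x ⟨hx0, hx1⟩
  have h16 : |x / (16:ℕ)| < 1/8 := by
    rw [abs_div]
    rw [abs_of_pos hx0]
    norm_num
    nlinarith [abs_nonneg x]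
  rw [aux_gval a hadd x 16 (by norm_num) h16]
  have hA : Afun a (x / (16:ℕ)) = a (x / (16:ℕ)) := by
    unfold Afun
    have := hadd (x / (16:ℕ)) (1/2) ⟨by positivity, by push_cast; nlinarith⟩
      ⟨by norm_num, by norm_num⟩ ⟨by positivity, by push_cast; nlinarith⟩
    linarith
  rw [hA]
  have := aux_scale a hadd 15 (x / (16:ℕ)) (by positivity)
    (by push_cast; nlinarith)
  push_cast at this ⊢
  rw [show (15:ℝ) + 1 = 16 by norm_num] at this
  rw [show (16:ℝ) * (x / 16) = x by ring] at this
  linarith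

theorem stmt_17 (a : ℝ → ℝ)
    (hadd : ∀ x y : ℝ, x ∈ Set.Ioo (0:ℝ) 1 → y ∈ Set.Ioo (0:ℝ) 1 →
      x + y ∈ Set.Ioo (0:ℝ) 1 → a (x + y) = a x + a y)
    (hmeas : Measurable fun x : Set.Ioo (0:ℝ) 1 => a x) :
    ∃ c : ℝ, ∀ x ∈ Set.Ioo (0:ℝ) 1, a x = c * x := by
  set g : ℝ → ℝ := gfun a with hg
  have gadd : ∀ x y : ℝ, g (x + y) = g x + g y := aux_gadd a hadd
  have gagree : ∀ x ∈ Set.Ioo (0:ℝ) 1, g x = a x := aux_gagree a hadd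
  set c : ℝ := g 1 with hc
  refine ⟨c, fun x hx => ?_⟩
  set h : ℝ → ℝ := fun x => g x - c * x with hh
  have g0 : g 0 = 0 := by
    have := gadd 0 0; simp at this; linarith
  have haddh : ∀ u v : ℝ, h (u + v) = h u + h v := by
    intro u v; simp only [hh, gadd u v]; ring
  have h0 : h 0 = 0 := by simp [hh, g0]
  have h1 : h 1 = 0 := by simp [hh, hc]
  have hneg : ∀ u : ℝ, h (-u) = - h u := by
    intro u
    have := haddh u (-u); rw [show u + -u = (0:ℝ) by ring, h0] at this; linarith
  have hnat : ∀ (n : ℕ) (u : ℝ), h ((n:ℝ) * u) = n * h u := by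
    intro n
    induction n with
    | zero => intro u; simpa using h0
    | succ n ih =>
      intro u
      have : ((n:ℝ) + 1) * u = (n:ℝ) * u + u := by ring
      push_cast
      rw [this, haddh, ih]; ring
  have hnatc : ∀ n : ℕ, h (n:ℝ) = 0 := by
    intro n
    have := hnat n 1; rw [mul_one, h1] at this; simpa using this
  have hintc : ∀ m : ℤ, h (m:ℝ) = 0 := by
    intro m
    obtain ⟨n, rfl | rfl⟩ := m.eq_nat_or_neg
    · exact_mod_cast hnatc n
    · push_cast
      rw [hneg]
      simpa using hnatc n
  have hratc : ∀ q : ℚ, h (q:ℝ) = 0 := by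
    intro q
    have hden : ((q.den:ℝ)) ≠ 0 := by
      have := q.den_pos; positivity
    have hmul : (q.den:ℝ) * (q:ℝ) = (q.num:ℝ) := by
      rw [Rat.cast_def]; field_simp
    have := hnat q.den (q:ℝ)
    rw [hmul, hintc q.num] at this
    have hd : (0:ℝ) < q.den := by exact_mod_cast q.den_pos
    nlinarith
  -- h = a - c x on (0, 1)
  have hval : ∀ z ∈ Set.Ioo (0:ℝ) 1, h z = a z - c * z := by
    intro z hz; simp only [hh]; rw [gagree z hz]
  -- measurable sets of boundedness
  set E : ℕ → Set ℝ := fun N =>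
    (fun y : Set.Ioo (0:ℝ) 1 => (y:ℝ)) ''
      {y : Set.Ioo (0:ℝ) 1 | (y:ℝ) < 1/8 ∧ |a y - c * y| ≤ N} with hE
  have hmemE : ∀ (N : ℕ) (z : ℝ),
      z ∈ E N ↔ z ∈ Set.Ioo (0:ℝ) 1 ∧ z < 1/8 ∧ |h z| ≤ N := by
    intro N z
    constructor
    · rintro ⟨y, ⟨hy1, hy2⟩, rfl⟩
      exact ⟨y.2, hy1, by rwa [hval y y.2]⟩
    · rintro ⟨hz, hz8, hzb⟩
      exact ⟨⟨z, hz⟩, ⟨hz8, by rwa [← hval z hz]⟩, rfl⟩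
  have hEmeas : ∀ N : ℕ, MeasurableSet (E N) := by
    intro N
    apply (MeasurableEmbedding.subtype_coe measurableSet_Ioo).measurableSet_image'
    apply MeasurableSet.inter
    · exact measurableSet_lt measurable_subtype_coe measurable_const
    · exact measurableSet_le ((hmeas.sub (measurable_const.mul measurable_subtype_coe)).abs)
        measurable_const
  have hcover : Set.Ioo (0:ℝ) (1/8) ⊆ ⋃ N, E N := by
    intro z hz
    have hz1 : z ∈ Set.Ioo (0:ℝ) 1 := ⟨hz.1, by linarith [hz.2]⟩
    refine Set.mem_iUnion.2 ⟨⌈|h z|⌉₊, ?_⟩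
    rw [hmemE]
    exact ⟨hz1, hz.2, Nat.le_ceil _⟩
  have hposN : ∃ N : ℕ, 0 < volume (E N) := by
    by_contra hcon
    push_neg at hcon
    have hall : ∀ N, volume (E N) = 0 := fun N => le_antisymm (hcon N) (zero_le)
    have : volume (Set.Ioo (0:ℝ) (1/8)) = 0 := by
      refine le_antisymm ?_ (zero_le)
      calc volume (Set.Ioo (0:ℝ) (1/8)) ≤ volume (⋃ N, E N) := measure_mono hcover
        _ = 0 := measure_iUnion_null hall
    rw [Real.volume_Ioo] at this
    simp at this
  obtain ⟨N, hN⟩ := hposN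
  have hstein : E N - E N ∈ nhds (0:ℝ) :=
    MeasureTheory.Measure.sub_mem_nhds_zero_of_addHaar_pos volume (E N) (hEmeas N) hN
  obtain ⟨δ, hδ0, hball⟩ := Metric.mem_nhds_iff.1 hstein
  have hbd : ∀ z : ℝ, |z| < δ → |h z| ≤ 2 * N := by
    intro z hz
    have : z ∈ E N - E N := hball (by simpa [Real.norm_eq_abs] using hz)
    obtain ⟨u, hu, v, hv, huv⟩ := this
    rw [hmemE] at hu hv
    have : h z = h u - h v := by
      have := haddh (u - v) v
      rw [show u - v + v = u by ring] at this
      rw [← huv]; linarith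
    rw [this]
    calc |h u - h v| ≤ |h u| + |h v| := abs_sub _ _
      _ ≤ 2 * N := by push_cast; linarith [hu.2.2, hv.2.2]
  -- conclude h x = 0
  have hx0 : h x = 0 := by
    by_contra hne
    have habs : 0 < |h x| := abs_pos.2 hne
    obtain ⟨n, hn⟩ := exists_nat_gt (2 * N / |h x|)
    have hn1 : 0 < n := by
      by_contra hn0
      push_neg at hn0
      interval_cases n
      simp at hn
      have : (0:ℝ) ≤ 2 * N / |h x| := by positivity
      linarith
    have hnr : (0:ℝ) < n := by exact_mod_cast hn1
    obtain ⟨q, hq⟩ := exists_rat_near x (show (0:ℝ) < δ / n by positivity)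
    have hsmall : |(n:ℝ) * (x - q)| < δ := by
      rw [abs_mul, abs_of_pos hnr]
      rw [lt_div_iff₀ hnr] at hq
      nlinarith
    have hhz : h ((n:ℝ) * (x - q)) = n * h x := by
      rw [hnat]
      have : h (x - q) = h x := by
        have := haddh (x - q) q
        rw [show x - q + (q:ℝ) = x by ring, hratc q] at this
        linarith
      rw [this]
    have := hbd _ hsmall
    rw [hhz, abs_mul, abs_of_pos hnr] at this
    rw [div_lt_iff₀ habs] at hn
    linarith
  have := hval x hx
  rw [hx0] at this
  linarith
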